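/- Under the same setup, with p > 1 and |f'|^{p/(p-1)} preinvex on K: |(1/η(b,a)) ∫_a^{a+η(b,a)} f(x) dx − f((2a+η(b,a))/2)| ≤ (η(b,a)/16)(4/(p+1))^{1/p} [ (3|f'(a)|^{p/(p-1)} + |f'(b)|^{p/(p-1)})^{(p-1)/p} + (|f'(a)|^{p/(p-1)} + 3|f'(b)|^{p/(p-1)})^{(p-1)/p} ]. -/

import Mathlib

open MeasureTheory intervalIntegral Set

lemma hhp_holder_half {p q : ℝ} (hpq : p.HolderConjugate q) (φ : ℝ → ℝ) (A B : ℝ)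
    (hA : 0 ≤ A) (hB : 0 ≤ B)
    (hmeas : AEStronglyMeasurable φ (volume.restrict (Set.Ioc (0:ℝ) (1/2))))
    (hbd : ∀ t ∈ Set.Icc (0:ℝ) (1/2), |φ t| ^ q ≤ (1 - t) * A + t * B) :
    ∫ t in (0:ℝ)..(1/2), t * |φ t| ≤
      ((1/2 : ℝ) ^ (p+1) / (p+1)) ^ (1/p) * ((3*A + B) / 8) ^ (1/q) := by
  have hq0 : 0 < q := hpq.symm.pos
  have hp0 : 0 < p := hpq.pos
  set μ := volume.restrict (Set.Ioc (0:ℝ) (1/2)) with hμ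
  have hmeasIoc : MeasurableSet (Set.Ioc (0:ℝ) (1/2)) := measurableSet_Ioc
  -- pointwise bound |φ t| ≤ (A + B) ^ (1/q) on Ioc
  have hCb : ∀ t ∈ Set.Ioc (0:ℝ) (1/2), |φ t| ≤ (A + B) ^ (1/q) := by
    intro t ht
    have ht' : t ∈ Set.Icc (0:ℝ) (1/2) := Set.Ioc_subset_Icc_self ht
    have h1 : |φ t| ^ q ≤ A + B := by
      have := hbd t ht'
      nlinarith [ht'.1, ht'.2, hA, hB]
    calc |φ t| = (|φ t| ^ q) ^ (1/q) := by
          rw [← Real.rpow_mul (abs_nonneg _), mul_one_div, div_self hq0.ne',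
            Real.rpow_one]
      _ ≤ (A + B) ^ (1/q) := Real.rpow_le_rpow (Real.rpow_nonneg (abs_nonneg _) _) h1 (by positivity)
  -- Memℒp facts
  have hid : MemLp (fun t : ℝ => t) (ENNReal.ofReal p) μ := by
    refine MemLp.of_bound aestronglyMeasurable_id (1/2) ?_
    refine (ae_restrict_iff' hmeasIoc).2 (ae_of_all _ fun t ht => ?_)
    rw [Real.norm_eq_abs, abs_of_nonneg ht.1.le]
    exact ht.2
  have hphiabs : AEStronglyMeasurable (fun t => |φ t|) μ := hmeas.norm.congr <| by
    refine ae_of_all _ fun t => ?_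
    simp [Real.norm_eq_abs]
  have hφ : MemLp (fun t => |φ t|) (ENNReal.ofReal q) μ := by
    refine MemLp.of_bound hphiabs ((A + B) ^ (1/q)) ?_
    refine (ae_restrict_iff' hmeasIoc).2 (ae_of_all _ fun t ht => ?_)
    rw [Real.norm_eq_abs, abs_abs]
    exact hCb t ht
  have hnn1 : 0 ≤ᵐ[μ] (fun t : ℝ => t) :=
    (ae_restrict_iff' hmeasIoc).2 (ae_of_all _ fun t ht => ht.1.le)
  have hnn2 : 0 ≤ᵐ[μ] (fun t => |φ t|) := ae_of_all _ fun t => abs_nonneg _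
  have holder := integral_mul_le_Lp_mul_Lq_of_nonneg hpq hnn1 hnn2 hid hφ
  -- rewrite interval integrals as set integrals
  have h01 : (0:ℝ) ≤ 1/2 := by norm_num
  rw [intervalIntegral.integral_of_le h01]
  refine le_trans holder ?_
  -- compute ∫ t^p
  have hIp : ∫ t, t ^ p ∂μ = (1/2 : ℝ) ^ (p+1) / (p+1) := by
    rw [hμ, ← intervalIntegral.integral_of_le h01,
      integral_rpow (Or.inl (by linarith))]
    rw [Real.zero_rpow (by positivity)]
    ring
  -- bound ∫ |φ|^q
  have hIq : ∫ t, |φ t| ^ q ∂μ ≤ (3*A + B) / 8 := by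
    have hint1 : IntegrableOn (fun t => |φ t| ^ q) (Set.Ioc (0:ℝ) (1/2)) := by
      have := hφ.integrable_norm_rpow (by simp [hp0, hq0]) (by simp)
      refine this.congr ?_
      refine ae_of_all _ fun t => ?_
      simp [Real.norm_eq_abs, abs_abs, ENNReal.toReal_ofReal hq0.le]
    have hint2 : IntegrableOn (fun t => (1 - t) * A + t * B) (Set.Ioc (0:ℝ) (1/2)) :=
      (Continuous.integrableOn_Ioc (by continuity))
    have hmono : ∫ t in Set.Ioc (0:ℝ) (1/2), |φ t| ^ q ≤
        ∫ t in Set.Ioc (0:ℝ) (1/2), ((1 - t) * A + t * B) := by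
      refine setIntegral_mono_on hint1 hint2 hmeasIoc fun t ht => hbd t (Set.Ioc_subset_Icc_self ht)
    refine le_trans hmono (le_of_eq ?_)
    rw [← intervalIntegral.integral_of_le h01]
    have heq : (fun t : ℝ => (1 - t) * A + t * B) = fun t => A + t * (B - A) := by
      funext t; ring
    rw [show (∫ t in (0:ℝ)..(1/2), ((1 - t) * A + t * B)) =
        ∫ t in (0:ℝ)..(1/2), (A + t * (B - A)) by rw [heq]]
    rw [intervalIntegral.integral_add (intervalIntegrable_const)
      ((intervalIntegral.intervalIntegrable_id).mul_const _),
      intervalIntegral.integral_mul_const, intervalIntegral.integral_const,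
      integral_id]
    norm_num
    ring
  have h1p : 0 ≤ (1:ℝ)/p := by positivity
  have h1q : 0 ≤ (1:ℝ)/q := by positivity
  have hIpnn : 0 ≤ ∫ t, t ^ p ∂μ := by
    rw [hIp]; positivity
  have hIqnn : 0 ≤ ∫ t, |φ t| ^ q ∂μ :=
    integral_nonneg fun t => Real.rpow_nonneg (abs_nonneg _) _
  refine mul_le_mul (Real.rpow_le_rpow hIpnn hIp.le h1p)
    (Real.rpow_le_rpow hIqnn hIq h1q) (Real.rpow_nonneg hIqnn _) ?_
  positivity

theorem hh_left_preinvex_pow_deriv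
    (K : Set ℝ) (hK : IsOpen K) (η : ℝ → ℝ → ℝ)
    (f f' : ℝ → ℝ) (a b : ℝ) (p : ℝ) (hp : 1 < p)
    (hinvex : ∀ t ∈ Set.Icc (0 : ℝ) 1, a + t * η b a ∈ K)
    (hf : ∀ x ∈ K, HasDerivAt f (f' x) x)
    (hη : 0 < η b a)
    (hpre : ∀ t ∈ Set.Icc (0 : ℝ) 1,
      |f' (a + t * η b a)| ^ (p / (p - 1))
        ≤ (1 - t) * |f' a| ^ (p / (p - 1)) + t * |f' b| ^ (p / (p - 1))) :
    |(1 / η b a) * (∫ x in a..(a + η b a), f x) - f ((2 * a + η b a) / 2)|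
      ≤ (η b a / 16) * (4 / (p + 1)) ^ (1 / p) *
        ((3 * |f' a| ^ (p / (p - 1)) + |f' b| ^ (p / (p - 1))) ^ ((p - 1) / p) +
         (|f' a| ^ (p / (p - 1)) + 3 * |f' b| ^ (p / (p - 1))) ^ ((p - 1) / p)) := by
  have hp0 : 0 < p := by linarith
  have hq : p.HolderConjugate (p / (p - 1)) := Real.HolderConjugate.conjExponent hp
  set q := p / (p - 1) with hqdef
  have hq0 : 0 < q := hq.symm.pos
  set A := |f' a| ^ q with hAdef
  set B := |f' b| ^ q with hBdef
  have hA0 : 0 ≤ A := Real.rpow_nonneg (abs_nonneg _) _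
  have hB0 : 0 ≤ B := Real.rpow_nonneg (abs_nonneg _) _
  set h := η b a with hhdef
  set g : ℝ → ℝ := fun t => f (a + t * h) with hgdef
  set φ : ℝ → ℝ := fun t => f' (a + t * h) with hφdef
  -- derivative of g
  have hgd : ∀ t ∈ Set.Icc (0:ℝ) 1, HasDerivAt g (h * φ t) t := by
    intro t ht
    have hx := hf _ (hinvex t ht)
    have hl : HasDerivAt (fun s : ℝ => a + s * h) h t := by
      simpa using ((hasDerivAt_id t).mul_const h).const_add a
    have := hx.comp t hl
    rw [show h * φ t = f' (a + t * h) * h by simp [hφdef, mul_comm]]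
    exact this
  -- measurability of φ along the path
  have hderiv_eq : ∀ t ∈ Set.Icc (0:ℝ) 1, deriv f (a + t * h) = φ t := fun t ht =>
    (hf _ (hinvex t ht)).deriv
  have hmφ1 : AEStronglyMeasurable φ (volume.restrict (Set.Ioc (0:ℝ) 1)) := by
    have hm0 : Measurable fun t : ℝ => deriv f (a + t * h) :=
      (measurable_deriv f).comp ((measurable_id.mul_const h).const_add a)
    refine hm0.aestronglyMeasurable.congr ?_
    refine (ae_restrict_iff' measurableSet_Ioc).2 (ae_of_all _ fun t ht => ?_)
    exact hderiv_eq t ⟨ht.1.le, ht.2⟩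
  have hmφ : AEStronglyMeasurable φ (volume.restrict (Set.Ioc (0:ℝ) (1/2))) :=
    hmφ1.mono_measure (Measure.restrict_mono (Set.Ioc_subset_Ioc le_rfl (by norm_num)) le_rfl)
  have hmψ : AEStronglyMeasurable (fun s => φ (1 - s)) (volume.restrict (Set.Ioc (0:ℝ) (1/2))) := by
    have hm1 : Measurable fun s : ℝ => deriv f (a + (1 - s) * h) :=
      (measurable_deriv f).comp (((measurable_const.sub measurable_id).mul_const h).const_add a)
    refine hm1.aestronglyMeasurable.congr ?_
    refine (ae_restrict_iff' measurableSet_Ioc).2 (ae_of_all _ fun s hs => ?_)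
    exact hderiv_eq (1 - s) ⟨by linarith [hs.2], by linarith [hs.1]⟩
  -- pointwise bound on |φ|
  have hφbd : ∀ t ∈ Set.Icc (0:ℝ) 1, |φ t| ≤ (A + B) ^ (1/q) := by
    intro t ht
    have h1 : |φ t| ^ q ≤ A + B := by
      have := hpre t ht
      nlinarith [ht.1, ht.2, hA0, hB0]
    calc |φ t| = (|φ t| ^ q) ^ (1/q) := by
          rw [← Real.rpow_mul (abs_nonneg _), mul_one_div, div_self hq0.ne', Real.rpow_one]
      _ ≤ (A + B) ^ (1/q) :=
          Real.rpow_le_rpow (Real.rpow_nonneg (abs_nonneg _) _) h1 (by positivity)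
  -- integrability of φ on [0,1]
  have hφint : IntervalIntegrable φ volume 0 1 := by
    rw [intervalIntegrable_iff_integrableOn_Ioc_of_le (by norm_num)]
    refine ⟨hmφ1, HasFiniteIntegral.restrict_of_bounded (C := (A + B) ^ (1/q))
      (by simp) ?_⟩
    refine (ae_restrict_iff' measurableSet_Ioc).2 (ae_of_all _ fun t ht => ?_)
    rw [Real.norm_eq_abs]
    exact hφbd t ⟨ht.1.le, ht.2⟩
  have husub1 : Set.uIcc (0:ℝ) (1/2) ⊆ Set.Icc 0 1 := by
    rw [Set.uIcc_of_le (show (0:ℝ) ≤ 1/2 by norm_num)]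
    exact Set.Icc_subset_Icc le_rfl (by norm_num)
  have husub2 : Set.uIcc (1/2:ℝ) 1 ⊆ Set.Icc 0 1 := by
    rw [Set.uIcc_of_le (show (1/2:ℝ) ≤ 1 by norm_num)]
    exact Set.Icc_subset_Icc (by norm_num) le_rfl
  have hu1 : Set.uIcc (0:ℝ) (1/2) ⊆ Set.uIcc (0:ℝ) 1 := by
    rw [Set.uIcc_of_le (show (0:ℝ) ≤ 1 by norm_num)]
    exact husub1
  have hu2 : Set.uIcc (1/2:ℝ) 1 ⊆ Set.uIcc (0:ℝ) 1 := by
    rw [Set.uIcc_of_le (show (0:ℝ) ≤ 1 by norm_num)]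
    exact husub2
  have hg'int1 : IntervalIntegrable (fun t => h * φ t) volume 0 (1/2) :=
    (hφint.const_mul h).mono_set hu1
  have hg'int2 : IntervalIntegrable (fun t => h * φ t) volume (1/2) 1 :=
    (hφint.const_mul h).mono_set hu2
  -- continuity and integrability of g
  have hgc : ContinuousOn g (Set.Icc 0 1) := fun t ht => ((hgd t ht).continuousAt).continuousWithinAt
  have hgint1 : IntervalIntegrable g volume 0 (1/2) :=
    (hgc.mono husub1).intervalIntegrable
  have hgint2 : IntervalIntegrable g volume (1/2) 1 :=
    (hgc.mono husub2).intervalIntegrable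
  have hparts1 := intervalIntegral.integral_mul_deriv_eq_deriv_mul
    (u := fun t : ℝ => t) (u' := fun _ => (1:ℝ)) (v := g) (v' := fun t => h * φ t)
    (a := 0) (b := 1/2)
    (fun x _ => hasDerivAt_id x) (fun x hx => hgd x (husub1 hx))
    intervalIntegrable_const hg'int1
  have hparts2 := intervalIntegral.integral_mul_deriv_eq_deriv_mul
    (u := fun t : ℝ => t - 1) (u' := fun _ => (1:ℝ)) (v := g) (v' := fun t => h * φ t)
    (a := 1/2) (b := 1)
    (fun x _ => (hasDerivAt_id x).sub_const 1) (fun x hx => hgd x (husub2 hx))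
    intervalIntegrable_const hg'int2
  set S1 := ∫ t in (0:ℝ)..(1/2), t * (h * φ t) with hS1def
  set S2 := ∫ t in (1/2:ℝ)..1, (t - 1) * (h * φ t) with hS2def
  have hsplit : (∫ t in (0:ℝ)..(1/2), g t) + ∫ t in (1/2:ℝ)..1, g t = ∫ t in (0:ℝ)..1, g t :=
    intervalIntegral.integral_add_adjacent_intervals hgint1 hgint2
  have e1 : S1 = (1/2) * g (1/2) - ∫ t in (0:ℝ)..(1/2), g t := by
    rw [hparts1]
    norm_num
  have e2 : S2 = (1/2) * g (1/2) - ∫ t in (1/2:ℝ)..1, g t := by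
    rw [hparts2]
    norm_num
  have hkey : (∫ t in (0:ℝ)..1, g t) - g (1/2) = -(S1 + S2) := by
    rw [e1, e2, ← hsplit]; ring
  -- rewrite the LHS of the goal
  have hne : h ≠ 0 := ne_of_gt hη
  have hsub : (∫ t in (0:ℝ)..1, g t) = (1/h) * ∫ x in a..(a + h), f x := by
    have := intervalIntegral.integral_comp_add_mul f hne a (a := 0) (b := 1)
    simp only [mul_zero, add_zero, mul_one, smul_eq_mul] at this
    rw [hgdef]
    simp only [show ∀ t : ℝ, a + t * h = a + h * t from fun t => by ring]
    rw [this, one_div]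
  have hmid : f ((2 * a + h) / 2) = g (1/2) := by
    show f ((2 * a + h) / 2) = f (a + 1/2 * h)
    congr 1
    ring
  have hLHS : |(1 / h) * (∫ x in a..(a + h), f x) - f ((2 * a + h) / 2)| = |S1 + S2| := by
    rw [← hsub, hmid, hkey, abs_neg]
  rw [hLHS]
  -- bound |S1| and |S2|
  have hbd1 : ∀ t ∈ Set.Icc (0:ℝ) (1/2), |φ t| ^ q ≤ (1 - t) * A + t * B := fun t ht =>
    hpre t ⟨ht.1, by linarith [ht.2]⟩
  have hbd2 : ∀ s ∈ Set.Icc (0:ℝ) (1/2), |φ (1 - s)| ^ q ≤ (1 - s) * B + s * A := by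
    intro s hs
    have := hpre (1 - s) ⟨by linarith [hs.2], by linarith [hs.1]⟩
    calc |φ (1 - s)| ^ q ≤ (1 - (1 - s)) * A + (1 - s) * B := this
      _ = (1 - s) * B + s * A := by ring
  have H1 := hhp_holder_half hq φ A B hA0 hB0 hmφ hbd1
  have H2 := hhp_holder_half hq (fun s => φ (1 - s)) B A hB0 hA0 hmψ hbd2
  set C : ℝ := ((1/2 : ℝ) ^ (p+1) / (p+1)) ^ (1/p) with hCdef
  have hC0 : 0 ≤ C := by rw [hCdef]; positivity
  have hS1bd : |S1| ≤ h * (C * ((3*A + B)/8) ^ (1/q)) := by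
    calc |S1| ≤ ∫ t in (0:ℝ)..(1/2), |t * (h * φ t)| :=
          intervalIntegral.abs_integral_le_integral_abs (by norm_num)
      _ = ∫ t in (0:ℝ)..(1/2), h * (t * |φ t|) := by
          refine intervalIntegral.integral_congr fun t ht => ?_
          have ht0 : 0 ≤ t := (husub1 ht).1
          rw [abs_mul, abs_mul, abs_of_nonneg ht0, abs_of_nonneg hη.le]
          ring
      _ = h * ∫ t in (0:ℝ)..(1/2), t * |φ t| := intervalIntegral.integral_const_mul _ _
      _ ≤ h * (C * ((3*A + B)/8) ^ (1/q)) := by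
          exact mul_le_mul_of_nonneg_left H1 hη.le
  have hS2bd : |S2| ≤ h * (C * ((3*B + A)/8) ^ (1/q)) := by
    have hcv : (∫ x in (0:ℝ)..(1/2), (1 - (1 - x)) * (h * |φ (1 - x)|))
        = ∫ t in (1/2:ℝ)..1, (1 - t) * (h * |φ t|) := by
      have := intervalIntegral.integral_comp_sub_left
        (f := fun t => (1 - t) * (h * |φ t|)) (a := 0) (b := 1/2) 1
      norm_num at this ⊢
      convert this using 2 <;> norm_num
    calc |S2| ≤ ∫ t in (1/2:ℝ)..1, |(t - 1) * (h * φ t)| :=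
          intervalIntegral.abs_integral_le_integral_abs (by norm_num)
      _ = ∫ t in (1/2:ℝ)..1, (1 - t) * (h * |φ t|) := by
          refine intervalIntegral.integral_congr fun t ht => ?_
          have ht1 : t ≤ 1 := (husub2 ht).2
          rw [abs_mul, abs_mul, abs_of_nonpos (by linarith : t - 1 ≤ 0), abs_of_nonneg hη.le]
          ring
      _ = ∫ x in (0:ℝ)..(1/2), (1 - (1 - x)) * (h * |φ (1 - x)|) := hcv.symm
      _ = ∫ x in (0:ℝ)..(1/2), h * (x * |φ (1 - x)|) := by
          refine intervalIntegral.integral_congr fun x hx => ?_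
          ring
      _ = h * ∫ x in (0:ℝ)..(1/2), x * |φ (1 - x)| := intervalIntegral.integral_const_mul _ _
      _ ≤ h * (C * ((3*B + A)/8) ^ (1/q)) := mul_le_mul_of_nonneg_left H2 hη.le
  -- constant arithmetic
  have hqinv : 1/q = (p-1)/p := by rw [hqdef, one_div_div]
  have hscalar : C / (8:ℝ) ^ ((p-1)/p) = (1/16) * (4/(p+1)) ^ (1/p) := by
    have h2 : (0:ℝ) < 2 := two_pos
    have hp1 : (0:ℝ) < p + 1 := by linarith
    have e8 : (8:ℝ) = 2 ^ (3:ℝ) := by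
      rw [show (3:ℝ) = ((3:ℕ):ℝ) by norm_num, Real.rpow_natCast]; norm_num
    have e4 : (4:ℝ) = 2 ^ (2:ℝ) := by
      rw [show (2:ℝ) = ((2:ℕ):ℝ) by norm_num, Real.rpow_natCast]; norm_num
    have e16 : (1/16:ℝ) = 2 ^ (-4:ℝ) := by
      rw [show (-4:ℝ) = -((4:ℕ):ℝ) by norm_num, Real.rpow_neg h2.le, Real.rpow_natCast]
      norm_num
    have e12 : (1/2:ℝ) = 2 ^ (-1:ℝ) := by
      rw [Real.rpow_neg_one]; norm_num
    rw [hCdef, e8, e4, e16, e12]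
    simp only [← Real.rpow_mul h2.le]
    rw [Real.div_rpow (by positivity) hp1.le, Real.div_rpow (by positivity) hp1.le]
    simp only [← Real.rpow_mul h2.le]
    rw [div_right_comm, ← Real.rpow_sub h2]
    conv_rhs => rw [mul_div_assoc', ← Real.rpow_add h2]
    congr 2
    field_simp
    ring
  have hqinv' : (1:ℝ)/q = (p-1)/p := hqinv
  calc |S1 + S2| ≤ |S1| + |S2| := abs_add_le _ _
    _ ≤ h * (C * ((3*A + B)/8) ^ (1/q)) + h * (C * ((3*B + A)/8) ^ (1/q)) :=
        add_le_add hS1bd hS2bd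
    _ = (h/16) * (4/(p+1)) ^ (1/p) *
        ((3*A + B) ^ ((p-1)/p) + (A + 3*B) ^ ((p-1)/p)) := by
        rw [hqinv', Real.div_rpow (by positivity) (by norm_num : (0:ℝ) ≤ 8),
          Real.div_rpow (by positivity) (by norm_num : (0:ℝ) ≤ 8),
          show (3*B + A) = (A + 3*B) by ring,
          show h * (C * ((3*A + B) ^ ((p-1)/p) / 8 ^ ((p-1)/p)))
            = h * (C / 8 ^ ((p-1)/p)) * (3*A + B) ^ ((p-1)/p) by ring,
          show h * (C * ((A + 3*B) ^ ((p-1)/p) / 8 ^ ((p-1)/p)))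
            = h * (C / 8 ^ ((p-1)/p)) * (A + 3*B) ^ ((p-1)/p) by ring,
          hscalar]
        ring
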